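/- Let L be a meet-distributive meet-semilattice and let q be a lower neighbor of p ∈ L (i.e., p covers q). Then the set ℓ(p)∖ℓ(q) consists of exactly one element. -/
import Mathlib


def JoinIrred {L : Type*} [Preorder L] (p : L) : Prop := ¬ IsLUB {q | q < p} p

/-- `ℓ(q) = {p ∈ P : p ≤ q}`, where `P` is the set of join-irreducible elements. -/
def ell {L : Type*} [Preorder L] (q : L) : Set L := {p | JoinIrred p ∧ p ≤ q}

/-- The interval `[x,y]` is a Boolean lattice (of some rank `n`). -/
def IsBooleanInterval {L : Type*} [Preorder L] (x y : L) : Prop :=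
  ∃ n : ℕ, Nonempty ((Set.Icc x y) ≃o Set (Fin n))

/-- A meet-semilattice is *meet-distributive* if each interval `[x,y]` such that `x` is the
meet of the lower neighbors of `y` in this interval is Boolean. -/
def MeetDistributive (L : Type*) [SemilatticeInf L] : Prop :=
  ∀ x y : L, x ≤ y → IsGLB {z | x ≤ z ∧ z ⋖ y} x → IsBooleanInterval x y

section Aux

variable {L : Type*} [SemilatticeInf L]

/-- If `p` has two distinct lower covers then `p` is the LUB of the elements below it. -/
lemma lemB {p c c' : L} (h : c ⋖ p) (h' : c' ⋖ p) (hne : c ≠ c') :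
    IsLUB {z : L | z < p} p := by
  constructor
  · exact fun z hz => hz.le
  · intro u hu
    have hc : c ≤ u ⊓ p := le_inf (hu h.lt) h.le
    have hc' : c' ≤ u ⊓ p := le_inf (hu h'.lt) h'.le
    rcases eq_or_lt_of_le (inf_le_right : u ⊓ p ≤ p) with he | hl
    · exact he ▸ inf_le_left
    · have e1 : c = u ⊓ p := hc.lt_or_eq.resolve_left fun h1 => h.2 h1 hl
      have e2 : c' = u ⊓ p := hc'.lt_or_eq.resolve_left fun h1 => h'.2 h1 hl
      exact absurd (e1.trans e2.symm) hne

lemma Icc.covBy_coe {x p : L} {a b : Set.Icc x p} (h : a ⋖ b) : (a : L) ⋖ (b : L) := by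
  refine ⟨Subtype.coe_lt_coe.2 h.lt, fun w h1 h2 => ?_⟩
  have hw : w ∈ Set.Icc x p := ⟨a.2.1.trans h1.le, h2.le.trans b.2.2⟩
  exact h.2 (show a < (⟨w, hw⟩ : Set.Icc x p) from Subtype.coe_lt_coe.1 h1)
    (show (⟨w, hw⟩ : Set.Icc x p) < b from Subtype.coe_lt_coe.1 h2)

lemma Icc.covBy_subtype {x p : L} {a b : Set.Icc x p} (h : (a : L) ⋖ (b : L)) : a ⋖ b :=
  ⟨Subtype.coe_lt_coe.1 h.lt, fun _ h1 h2 =>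
    h.2 (Subtype.coe_lt_coe.2 h1) (Subtype.coe_lt_coe.2 h2)⟩

variable {x p : L} {n : ℕ}

lemma symm_univ (hxp : x ≤ p) (e : Set.Icc x p ≃o Set (Fin n)) :
    ((e.symm Set.univ : Set.Icc x p) : L) = p := by
  have hp : p ∈ Set.Icc x p := Set.right_mem_Icc.2 hxp
  have h2 : (⟨p, hp⟩ : Set.Icc x p) ≤ e.symm Set.univ := by
    rw [← e.symm_apply_apply ⟨p, hp⟩]
    exact e.symm.monotone (Set.subset_univ _)
  exact le_antisymm (e.symm Set.univ).2.2 (Subtype.coe_le_coe.2 h2)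

lemma symm_empty (hxp : x ≤ p) (e : Set.Icc x p ≃o Set (Fin n)) :
    ((e.symm ∅ : Set.Icc x p) : L) = x := by
  have hx : x ∈ Set.Icc x p := Set.left_mem_Icc.2 hxp
  have h2 : e.symm ∅ ≤ (⟨x, hx⟩ : Set.Icc x p) := by
    rw [← e.symm_apply_apply ⟨x, hx⟩]
    exact e.symm.monotone (Set.empty_subset _)
  exact le_antisymm (Subtype.coe_le_coe.2 h2) (e.symm ∅).2.1

lemma symm_le (e : Set.Icc x p ≃o Set (Fin n)) {A B : Set (Fin n)} (h : A ⊆ B) :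
    ((e.symm A : Set.Icc x p) : L) ≤ (e.symm B : Set.Icc x p) :=
  Subtype.coe_le_coe.2 (e.symm.monotone h)

lemma symm_inter (e : Set.Icc x p ≃o Set (Fin n)) (A B : Set (Fin n)) :
    ((e.symm (A ∩ B) : Set.Icc x p) : L) = ↑(e.symm A) ⊓ ↑(e.symm B) := by
  refine le_antisymm (le_inf (symm_le e Set.inter_subset_left)
    (symm_le e Set.inter_subset_right)) ?_
  have hm : ((e.symm A : L) ⊓ (e.symm B : L)) ∈ Set.Icc x p :=
    ⟨le_inf (e.symm A).2.1 (e.symm B).2.1, inf_le_left.trans (e.symm A).2.2⟩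
  have h1 : e (⟨_, hm⟩ : Set.Icc x p) ⊆ A := by
    have h := e.monotone (show (⟨_, hm⟩ : Set.Icc x p) ≤ e.symm A from inf_le_left)
    rwa [e.apply_symm_apply] at h
  have h2 : e (⟨_, hm⟩ : Set.Icc x p) ⊆ B := by
    have h := e.monotone (show (⟨_, hm⟩ : Set.Icc x p) ≤ e.symm B from inf_le_right)
    rwa [e.apply_symm_apply] at h
  exact Subtype.coe_le_coe.2 (e.le_symm_apply.2 (Set.subset_inter h1 h2))

lemma le_symm_aux (hxp : x ≤ p) (e : Set.Icc x p ≃o Set (Fin n)) {r : L} (hr : r ≤ p)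
    (F : Finset (Fin n)) :
    ∀ S : Set (Fin n), Sᶜ = ↑F →
      (∀ k ∈ F, r ≤ ((e.symm (Set.univ \ {k}) : Set.Icc x p) : L)) →
        r ≤ (e.symm S : Set.Icc x p) := by
  classical
  induction F using Finset.induction_on with
  | empty =>
    intro S hS _
    have hSu : S = Set.univ := by
      rw [← compl_compl S, hS]; simp
    rw [hSu, symm_univ hxp e]; exact hr
  | @insert a F ha IH =>
    intro S hS hle
    have haS : a ∉ S := by
      intro h
      have : a ∈ Sᶜ := by rw [hS]; simp
      exact this h
    have hSeq : S = ((↑F : Set (Fin n))ᶜ) ∩ (Set.univ \ {a}) := by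
      have hmem : ∀ t, t ∉ S ↔ t = a ∨ t ∈ F := by
        intro t
        rw [← Set.mem_compl_iff, hS]
        simp
      ext t
      have ht := hmem t
      simp only [Set.mem_inter_iff, Set.mem_compl_iff, Set.mem_diff, Set.mem_univ,
        Set.mem_singleton_iff, true_and, Finset.mem_coe]
      tauto
    rw [hSeq, symm_inter e]
    exact le_inf (IH _ (by simp) fun k hk => hle k (Finset.mem_insert_of_mem hk))
      (hle a (Finset.mem_insert_self a F))

lemma le_symm (hxp : x ≤ p) (e : Set.Icc x p ≃o Set (Fin n)) {r : L} (hr : r ≤ p)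
    (S : Set (Fin n)) (h : ∀ k, k ∉ S → r ≤ ((e.symm (Set.univ \ {k}) : Set.Icc x p) : L)) :
    r ≤ (e.symm S : Set.Icc x p) := by
  classical
  exact le_symm_aux hxp e hr Sᶜ.toFinset S (Set.coe_toFinset _).symm
    (fun k hk => h k (by simpa using (Set.mem_toFinset.1 hk)))

end Aux

section Main

variable {L : Type*} [Fintype L] [SemilatticeInf L]

lemma setup (hL : MeetDistributive L) {p c : L} (hc : c ⋖ p) :
    ∃ x : L, x ≤ p ∧ (∀ z : L, z ⋖ p → x ≤ z) ∧ IsBooleanInterval x p := by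
  classical
  set N : Finset L := Finset.univ.filter (fun z => z ⋖ p) with hN
  have hcN : c ∈ N := by simp [hN, hc]
  have hNne : N.Nonempty := ⟨c, hcN⟩
  set x := N.inf' hNne id with hx
  have hxz : ∀ z : L, z ⋖ p → x ≤ z := fun z hz => Finset.inf'_le id (by simp [hN, hz])
  have hxp : x ≤ p := (hxz c hc).trans hc.le
  refine ⟨x, hxp, hxz, hL x p hxp ?_⟩
  constructor
  · rintro z ⟨-, hz⟩; exact hxz z hz
  · intro w hw
    apply Finset.le_inf'
    intro z hz
    have hzp : z ⋖ p := by simpa [hN] using hz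
    exact hw ⟨hxz z hzp, hzp⟩

/-- Key lemma: a join-irreducible element below `p` cannot fail to be below two
distinct lower covers of `p`. -/
lemma lemA (hL : MeetDistributive L) (p : L) :
    ∀ c c' r : L, c ⋖ p → c' ⋖ p → c ≠ c' → JoinIrred r → r ≤ p →
      ¬ r ≤ c → ¬ r ≤ c' → False := by
  induction p using WellFoundedLT.induction with
  | _ p IH =>
  intro c c' r hc hc' hne hr hrp hrc hrc'
  rcases eq_or_lt_of_le hrp with rfl | hrlt
  · exact hr (lemB hc hc' hne)
  obtain ⟨x, hxp, hxz, nn, ⟨e⟩⟩ := setup hL hc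
  set C : Fin nn → L := fun k => ((e.symm (Set.univ \ {k}) : Set.Icc x p) : L) with hC
  have hpmem : p ∈ Set.Icc x p := Set.right_mem_Icc.2 hxp
  have etop : e ⟨p, hpmem⟩ = Set.univ := by
    have := symm_univ hxp e
    have h2 : e.symm Set.univ = ⟨p, hpmem⟩ := Subtype.ext this
    rw [← h2, e.apply_symm_apply]
  have coatom : ∀ z : L, z ⋖ p → ∃ k, z = C k := by
    intro z hz
    have hzm : z ∈ Set.Icc x p := ⟨hxz z hz, hz.le⟩
    have hsub : (⟨z, hzm⟩ : Set.Icc x p) ⋖ ⟨p, hpmem⟩ := Icc.covBy_subtype hz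
    have himg : e ⟨z, hzm⟩ ⋖ Set.univ := by
      rw [← etop]; exact (apply_covBy_apply_iff e).2 hsub
    obtain ⟨a, -, hA⟩ := himg.exists_set_sdiff_singleton
    refine ⟨a, ?_⟩
    have h5 : e.symm (Set.univ \ {a}) = ⟨z, hzm⟩ := by rw [hA, e.symm_apply_apply]
    show z = ((e.symm (Set.univ \ {a}) : Set.Icc x p) : L)
    rw [h5]
  obtain ⟨i, hi⟩ := coatom c hc
  obtain ⟨j, hj⟩ := coatom c' hc'
  have hij : i ≠ j := fun h => hne (hi.trans (h ▸ hj.symm))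
  set M : Set (Fin nn) := {k | ¬ r ≤ C k} with hM
  have hiM : i ∈ M := by rw [hM]; exact fun h => hrc (hi ▸ h)
  have hjM : j ∈ M := by rw [hM]; exact fun h => hrc' (hj ▸ h)
  obtain ⟨z₀, hz₀r, hz₀⟩ := hrlt.exists_le_covby
  obtain ⟨k₀, hk₀⟩ := coatom z₀ hz₀
  have hk₀M : k₀ ∉ M := by
    rw [hM]; simp only [Set.mem_setOf_eq, not_not]
    rw [← hk₀]; exact hz₀r
  set u : L := ((e.symm M : Set.Icc x p) : L) with hu
  have hru : r ≤ u :=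
    le_symm hxp e hrp M (fun k hk => not_not.1 (fun h => hk h))
  have hup : u < p := by
    have h1 : u ≤ C k₀ := symm_le e (fun t ht => ⟨Set.mem_univ t, fun hte => hk₀M (hte ▸ ht)⟩)
    rw [← hk₀] at h1
    exact lt_of_le_of_lt h1 hz₀.lt
  set d : L := ((e.symm (M \ {i}) : Set.Icc x p) : L) with hd
  set d' : L := ((e.symm (M \ {j}) : Set.Icc x p) : L) with hd'
  have hdu : d ⋖ u := by
    apply Icc.covBy_coe
    exact (apply_covBy_apply_iff e.symm).2 (Set.sdiff_singleton_covBy hiM)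
  have hd'u : d' ⋖ u := by
    apply Icc.covBy_coe
    exact (apply_covBy_apply_iff e.symm).2 (Set.sdiff_singleton_covBy hjM)
  have hrd : ¬ r ≤ d := by
    intro h
    have hle : d ≤ C i := symm_le e (fun t ht => ⟨Set.mem_univ t, fun hte => ht.2 hte⟩)
    exact hiM (h.trans hle)
  have hrd' : ¬ r ≤ d' := by
    intro h
    have hle : d' ≤ C j := symm_le e (fun t ht => ⟨Set.mem_univ t, fun hte => ht.2 hte⟩)
    exact hjM (h.trans hle)
  have hdd' : d ≠ d' := by
    intro h
    have h2 : M \ {i} = M \ {j} := e.symm.injective (Subtype.coe_injective h)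
    have : j ∈ M \ {i} := ⟨hjM, fun hji => hij (Set.mem_singleton_iff.1 hji).symm⟩
    rw [h2] at this
    exact this.2 rfl
  exact IH u hup d d' r hdu hd'u hdd' hr hru hrd hrd'

/-- Uniqueness of the join-irreducible in `ℓ(p) \ ℓ(q)`. -/
lemma lemU (hL : MeetDistributive L) (p : L) :
    ∀ q r s : L, q ⋖ p → JoinIrred r → r ≤ p → ¬ r ≤ q →
      JoinIrred s → s ≤ p → ¬ s ≤ q → r = s := by
  induction p using WellFoundedLT.induction with
  | _ p IH =>
  intro q r s hq hr hrp hrq hs hsp hsq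
  obtain ⟨x, hxp, hxz, nn, ⟨e⟩⟩ := setup hL hq
  set C : Fin nn → L := fun k => ((e.symm (Set.univ \ {k}) : Set.Icc x p) : L) with hC
  have hpmem : p ∈ Set.Icc x p := Set.right_mem_Icc.2 hxp
  have etop : e ⟨p, hpmem⟩ = Set.univ := by
    have := symm_univ hxp e
    have h2 : e.symm Set.univ = ⟨p, hpmem⟩ := Subtype.ext this
    rw [← h2, e.apply_symm_apply]
  have coatom : ∀ z : L, z ⋖ p → ∃ k, z = C k := by
    intro z hz
    have hzm : z ∈ Set.Icc x p := ⟨hxz z hz, hz.le⟩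
    have hsub : (⟨z, hzm⟩ : Set.Icc x p) ⋖ ⟨p, hpmem⟩ := Icc.covBy_subtype hz
    have himg : e ⟨z, hzm⟩ ⋖ Set.univ := by
      rw [← etop]; exact (apply_covBy_apply_iff e).2 hsub
    obtain ⟨a, -, hA⟩ := himg.exists_set_sdiff_singleton
    refine ⟨a, ?_⟩
    have h5 : e.symm (Set.univ \ {a}) = ⟨z, hzm⟩ := by rw [hA, e.symm_apply_apply]
    show z = ((e.symm (Set.univ \ {a}) : Set.Icc x p) : L)
    rw [h5]
  have hCcov : ∀ k, C k ⋖ p := by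
    intro k
    have h1 : (Set.univ \ {k} : Set (Fin nn)) ⋖ Set.univ :=
      Set.sdiff_singleton_covBy (Set.mem_univ k)
    have h2 : e.symm (Set.univ \ {k}) ⋖ e.symm Set.univ :=
      (apply_covBy_apply_iff e.symm).2 h1
    have h3 := Icc.covBy_coe h2
    rwa [symm_univ hxp e] at h3
  obtain ⟨i, hi⟩ := coatom q hq
  -- case nn = 0
  rcases Nat.eq_zero_or_pos nn with h0 | hpos
  · exfalso
    have hqm : q ∈ Set.Icc x p := ⟨hxz q hq, hq.le⟩
    have : (⟨q, hqm⟩ : Set.Icc x p) = ⟨p, hpmem⟩ := by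
      apply e.injective
      subst h0
      exact Subsingleton.elim _ _
    exact hq.lt.ne (congrArg Subtype.val this)
  rcases eq_or_lt_of_le (Nat.succ_le_of_lt hpos) with h1 | h2
  · -- nn = 1 : q is the unique lower cover of p, so r = s = p
    have huniq : ∀ z : L, z ⋖ p → z = q := by
      intro z hz
      obtain ⟨k, hk⟩ := coatom z hz
      have : k = i := by
        have : Subsingleton (Fin nn) := by
          rw [← h1]; infer_instance
        exact Subsingleton.elim k i
      rw [hk, this, ← hi]
    have hrp' : r = p := by
      rcases eq_or_lt_of_le hrp with h | h
      · exact h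
      · obtain ⟨z, hz1, hz2⟩ := h.exists_le_covby
        exact absurd (hz1.trans_eq (huniq z hz2)) hrq
    have hsp' : s = p := by
      rcases eq_or_lt_of_le hsp with h | h
      · exact h
      · obtain ⟨z, hz1, hz2⟩ := h.exists_le_covby
        exact absurd (hz1.trans_eq (huniq z hz2)) hsq
    rw [hrp', hsp']
  · -- nn ≥ 2
    have hcard : 1 < Fintype.card (Fin nn) := by simpa using h2
    have hCne : ∀ k k' : Fin nn, k ≠ k' → C k ≠ C k' := by
      intro k k' hkk' hCe
      apply hkk'
      have h2 : (Set.univ \ {k} : Set (Fin nn)) = Set.univ \ {k'} :=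
        e.symm.injective (Subtype.coe_injective hCe)
      by_contra hne
      have : k' ∈ (Set.univ \ {k} : Set (Fin nn)) := ⟨Set.mem_univ _, fun h => hne (by simpa using h.symm)⟩
      rw [h2] at this
      exact this.2 rfl
    -- r < p and s < p
    have hlt : ∀ t : L, JoinIrred t → t ≤ p → t < p := by
      intro t ht htp
      rcases eq_or_lt_of_le htp with h | h
      · exfalso
        obtain ⟨k, hk⟩ := Fintype.exists_ne_of_one_lt_card hcard i
        exact ht (h ▸ lemB (hCcov k) (hCcov i) (hCne k i hk))
      · exact h
    -- every such t is below C k for all k ≠ i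
    have hbelow : ∀ t : L, JoinIrred t → t ≤ p → ¬ t ≤ q → ∀ k, k ≠ i → t ≤ C k := by
      intro t ht htp htq k hk
      by_contra htk
      exact lemA hL p (C k) q t (hCcov k) hq (hi ▸ hCne k i hk) ht htp htk htq
    -- hence below a := e.symm {i}
    set a : L := ((e.symm {i} : Set.Icc x p) : L) with ha
    have hra : r ≤ a :=
      le_symm hxp e hrp ({i}) (fun k hk => hbelow r hr hrp hrq k (by simpa using hk))
    have hsa : s ≤ a :=
      le_symm hxp e hsp ({i}) (fun k hk => hbelow s hs hsp hsq k (by simpa using hk))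
    have hap : a < p := by
      obtain ⟨k, hk⟩ := Fintype.exists_ne_of_one_lt_card hcard i
      have h1 : a ≤ C k := by
        apply symm_le e
        intro t ht
        rw [Set.mem_singleton_iff] at ht
        subst ht
        exact ⟨Set.mem_univ _, fun h => hk (Set.mem_singleton_iff.1 h).symm⟩
      exact lt_of_le_of_lt h1 (hCcov k).lt
    have hxa : x ⋖ a := by
      have h1 : (∅ : Set (Fin nn)) ⋖ {i} := by
        have h := Set.covBy_insert (Set.notMem_empty i)
        simpa using h
      have h2 := Icc.covBy_coe ((apply_covBy_apply_iff e.symm).2 h1)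
      rwa [symm_empty hxp e] at h2
    have hrx : ¬ r ≤ x := fun h => hrq (h.trans (hxz q hq))
    have hsx : ¬ s ≤ x := fun h => hsq (h.trans (hxz q hq))
    exact IH a hap x r s hxa hr hra hrx hs hsa hsx

lemma ell_isLUB (p : L) : IsLUB (ell p) p := by
  induction p using WellFoundedLT.induction with
  | _ p IH =>
  constructor
  · exact fun t ht => ht.2
  · intro u hu
    by_cases hp : JoinIrred p
    · exact hu ⟨hp, le_rfl⟩
    · have hp' : IsLUB {z : L | z < p} p := not_not.1 hp
      apply hp'.2
      intro z hz
      exact (IH z hz).2 (fun t ht => hu ⟨ht.1, ht.2.trans hz.le⟩)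

end Main

/-- If `L` is a meet-distributive meet-semilattice and `q` is a lower neighbor of `p`
(i.e. `p` covers `q`), then `ℓ(p) ∖ ℓ(q)` consists of exactly one element. -/
theorem stmt10 {L : Type*} [Fintype L] [SemilatticeInf L]
    (hL : MeetDistributive L) {p q : L} (hq : q ⋖ p) :
    ∃ r : L, ell p \ ell q = {r} := by
  have hex : ∃ r, r ∈ ell p \ ell q := by
    by_contra h
    push_neg at h
    have hsub : ell p ⊆ ell q := by
      intro t ht
      by_contra h2
      exact (h t) ⟨ht, h2⟩
    have hpq : p ≤ q := (ell_isLUB p).2 (fun t ht => (hsub ht).2)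
    exact hq.lt.not_ge hpq
  obtain ⟨r, hr⟩ := hex
  refine ⟨r, ?_⟩
  ext t
  simp only [Set.mem_singleton_iff]
  constructor
  · intro ht
    exact lemU hL p q t r hq ht.1.1 ht.1.2 (fun h => ht.2 ⟨ht.1.1, h⟩)
      hr.1.1 hr.1.2 (fun h => hr.2 ⟨hr.1.1, h⟩)
  · rintro rfl; exact hr
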